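/- For all u, v ∈ ℝ and all t ∈ (0, π), the 4×6 matrix B(u,v,t) from the helicoid–catenoid family has rank exactly 4. -/

import Mathlib

open Matrix Real

/-- The 4×6 matrix of the system (8)–(11) for the helicoid–catenoid family. -/
noncomputable def helB (u v t : ℝ) : Matrix (Fin 4) (Fin 6) ℝ :=
  !![cos u, sin u, -sinh v, 0, 0, 0;
     0, 0, 0, cos u, sin u, -sinh v;
     cos t * cos u * sinh v - sin t * sin u * cosh v,
       cos t * sin u * sinh v + sin t * cos u * cosh v, cos t,
       cos t * sin u * cosh v + sin t * cos u * sinh v,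
       -(cos t * cos u * cosh v) + sin t * sin u * sinh v, sin t;
     cos u * sinh v, sin u * sinh v, 1, -(sin u * cosh v), cos u * cosh v, 0]

theorem helicoid_matrix_rank_four (u v t : ℝ) (ht : t ∈ Set.Ioo 0 Real.pi) :
    (helB u v t).rank = 4 := by
  obtain ⟨ht0, htpi⟩ := ht
  have hst : 0 < Real.sin t := Real.sin_pos_of_pos_of_lt_pi ht0 htpi
  set c : Fin 4 → Fin 6 := ![0, 1, 3, 4] with hc
  set S : Matrix (Fin 4) (Fin 4) ℝ := (helB u v t).submatrix id c with hS
  have hSeq : S = !![cos u, sin u, 0, 0;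
      0, 0, cos u, sin u;
      cos t * cos u * sinh v - sin t * sin u * cosh v,
        cos t * sin u * sinh v + sin t * cos u * cosh v,
        cos t * sin u * cosh v + sin t * cos u * sinh v,
        -(cos t * cos u * cosh v) + sin t * sin u * sinh v;
      cos u * sinh v, sin u * sinh v, -(sin u * cosh v), cos u * cosh v] := by
    ext i j
    fin_cases i <;> fin_cases j <;> simp [hS, hc, helB]
  have hdet : S.det = -(Real.sin t * Real.cosh v ^ 2) := by
    have h := Real.sin_sq_add_cos_sq u
    rw [hSeq]
    simp [Matrix.det_succ_row_zero, Fin.sum_univ_succ, Fin.succAbove]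
    ring_nf
    linear_combination (-(Real.sin t * Real.cosh v ^ 2) *
      (Real.cos u ^ 2 + Real.sin u ^ 2 + 1)) * h
  have hdet_ne : S.det ≠ 0 := by
    rw [hdet]
    have h1 : 0 < Real.sin t * Real.cosh v ^ 2 :=
      mul_pos hst (pow_pos (Real.cosh_pos v) 2)
    intro hzero
    linarith
  have hSrank : S.rank = 4 := by
    have := Matrix.rank_of_isUnit S ((Matrix.isUnit_iff_isUnit_det S).mpr hdet_ne.isUnit)
    simpa using this
  have hprod : S = helB u v t * ((1 : Matrix (Fin 6) (Fin 6) ℝ).submatrix id c) := by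
    ext i j
    simp [hS, Matrix.mul_apply, Matrix.submatrix_apply, Matrix.one_apply, mul_ite,
      Finset.sum_ite_eq']
  have hle : (4 : ℕ) ≤ (helB u v t).rank := by
    have h1 := Matrix.rank_mul_le_left (helB u v t)
      ((1 : Matrix (Fin 6) (Fin 6) ℝ).submatrix id c)
    rw [← hprod, hSrank] at h1
    exact h1
  have hge : (helB u v t).rank ≤ 4 := (helB u v t).rank_le_card_height
  omega
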